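/- Let Q ≥ 2, let r₋ ∈ {0,…,Q−2}, r₊ = r₋ + 1, let H ≥ 1 be an integer, and let N = N₁ + N₂ with N₁, N₂ ≥ 0, N ≥ 1, H·C(Q,r₊) dividing N₁ and H·C(Q,r₋) dividing N₂ (binomial coefficients, with C(Q,0) = 1). Then for every T ≥ 1 there exists a (Q+H, N, Q, T)-scheme with singleton Reduce assignment (servers 1,…,Q are solvers, the remaining H servers are helpers reducing nothing) in which each solver maps exactly (N₁·r₊ + N₂·r₋)/Q files, each helper maps exactly N/H files, and the communication load equals (N₁·g(r₊) + N₂·g(r₋))/N, where g(x) = (Q−x)/(Q·(x+1)). -/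

import Mathlib

/-- A (K,N,Q,T)-scheme: K servers, N input files, Q output functions,
T-bit intermediate values.  `M k` is the set of files mapped by server `k`,
`W k` the set of functions reduced by server `k`, `len k` the length (in bits)
of server `k`'s message; `enc` produces the message of each server from its
locally computed intermediate values, and `dec` recovers, for each server `k`
and each `q ∈ W k`, the full row of intermediate values of function `q`
from all messages and the local values, correctly for every realization `v`. -/
structure Scheme (K N Q T : ℕ) where
  M : Fin K → Finset (Fin N)
  W : Fin K → Finset (Fin Q)
  cover : ∀ n : Fin N, ∃ k : Fin K, n ∈ M k
  len : Fin K → ℕ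
  enc : (k : Fin K) → (Fin Q → {n : Fin N // n ∈ M k} → (Fin T → Bool)) →
    (Fin (len k) → Bool)
  dec : (k : Fin K) → (q : Fin Q) → q ∈ W k →
    ((j : Fin K) → (Fin (len j) → Bool)) →
    (Fin Q → {n : Fin N // n ∈ M k} → (Fin T → Bool)) →
    (Fin N → Fin T → Bool)
  correct : ∀ (v : Fin Q × Fin N → Fin T → Bool) (k : Fin K) (q : Fin Q) (hq : q ∈ W k),
    dec k q hq (fun j => enc j (fun q' n => v (q', n.1))) (fun q' n => v (q', n.1)) =
      fun n => v (q, n)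

/-- Peak computation load `p = (max_k |M k|)/N`. -/
noncomputable def peakLoad {K N Q T : ℕ} (S : Scheme K N Q T) : ℝ :=
  ((Finset.univ.sup (fun k : Fin K => (S.M k).card) : ℕ) : ℝ) / N

/-- Communication load `L = (∑_k ℓ k)/(Q·N·T)`. -/
noncomputable def commLoad {K N Q T : ℕ} (S : Scheme K N Q T) : ℝ :=
  (∑ k : Fin K, (S.len k : ℝ)) / ((Q : ℝ) * N * T)

/-- Singleton Reduce assignment: the `W k` are pairwise disjoint, cover `Fin Q`,
and each server reduces at most one function. -/
def SingletonReduce {K N Q T : ℕ} (S : Scheme K N Q T) : Prop :=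
  (∀ j k : Fin K, j ≠ k → Disjoint (S.W j) (S.W k)) ∧
  (∀ q : Fin Q, ∃ k : Fin K, q ∈ S.W k) ∧
  (∀ k : Fin K, (S.W k).card ≤ 1)

namespace CSE
open Finset


def toZ : Bool → ZMod 2 := fun b => cond b 1 0
def toB : ZMod 2 → Bool := fun z => decide (z = 1)

lemma toZ_toB (z : ZMod 2) : toZ (toB z) = z := by revert z; decide
lemma toB_toZ (b : Bool) : toB (toZ b) = b := by cases b <;> rfl
lemma zmod2_add_self (x : ZMod 2) : x + x = 0 := by revert x; decide

/-- File index type: group 1 blocks (solver sets of size `r+1`) and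
group 2 blocks (solver sets of size `r`), each block tagged by a helper
and a copy index. -/
abbrev FI (Q r H c1 c2 : ℕ) : Type :=
  ({A : Finset (Fin Q) // A.card = r + 1} × Fin H × Fin c1) ⊕
  ({A : Finset (Fin Q) // A.card = r} × Fin H × Fin c2)

/-- Message index type for one helper. -/
abbrev MI (Q r T c1 c2 : ℕ) : Type :=
  (({B : Finset (Fin Q) // B.card = r + 2} × Fin c1) ⊕
   ({B : Finset (Fin Q) // B.card = r + 1} × Fin c2)) × Fin T

variable {Q r H c1 c2 N T : ℕ}

def prof : FI Q r H c1 c2 → Finset (Fin Q) × Fin H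
  | .inl x => (x.1.1, x.2.1)
  | .inr x => (x.1.1, x.2.1)

noncomputable def E (hN : Fintype.card (FI Q r H c1 c2) = N) : FI Q r H c1 c2 ≃ Fin N :=
  Fintype.equivFinOfCardEq hN

noncomputable def eM (Q r T c1 c2 : ℕ) :
    MI Q r T c1 c2 ≃ Fin (Fintype.card (MI Q r T c1 c2)) := Fintype.equivFin _

noncomputable def Amap (hN : Fintype.card (FI Q r H c1 c2) = N) (n : Fin N) : Finset (Fin Q) :=
  (prof ((E hN).symm n)).1

noncomputable def Hmap (hN : Fintype.card (FI Q r H c1 c2) = N) (n : Fin N) : Fin H :=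
  (prof ((E hN).symm n)).2

lemma Amap_E (hN : Fintype.card (FI Q r H c1 c2) = N) (x : FI Q r H c1 c2) :
    Amap hN (E hN x) = (prof x).1 := by simp [Amap]

lemma Hmap_E (hN : Fintype.card (FI Q r H c1 c2) = N) (x : FI Q r H c1 c2) :
    Hmap hN (E hN x) = (prof x).2 := by simp [Hmap]

noncomputable def Mmap (hN : Fintype.card (FI Q r H c1 c2) = N) (k : Fin (Q + H)) : Finset (Fin N) :=
  if hk : (k : ℕ) < Q then univ.filter (fun n => (⟨(k : ℕ), hk⟩ : Fin Q) ∈ Amap hN n)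
  else univ.filter (fun n => ((Hmap hN n : ℕ) = (k : ℕ) - Q))

def Wmap (Q H : ℕ) (k : Fin (Q + H)) : Finset (Fin Q) :=
  if hk : (k : ℕ) < Q then {⟨(k : ℕ), hk⟩} else ∅

def lenmap (Q H r T c1 c2 : ℕ) (k : Fin (Q + H)) : ℕ :=
  if (k : ℕ) < Q then 0 else Fintype.card (MI Q r T c1 c2)

lemma mem_Mmap_helper (hN : Fintype.card (FI Q r H c1 c2) = N) {k : Fin (Q + H)}
    (hk : ¬ (k : ℕ) < Q) (x : FI Q r H c1 c2)
    (hx : ((prof x).2 : ℕ) = (k : ℕ) - Q) : E hN x ∈ Mmap hN k := by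
  rw [Mmap, dif_neg hk, Finset.mem_filter]; exact ⟨Finset.mem_univ _, by rw [Hmap_E]; exact hx⟩

lemma mem_Mmap_solver (hN : Fintype.card (FI Q r H c1 c2) = N) {k : Fin (Q + H)}
    (hk : (k : ℕ) < Q) (x : FI Q r H c1 c2)
    (hx : (⟨(k : ℕ), hk⟩ : Fin Q) ∈ (prof x).1) : E hN x ∈ Mmap hN k := by
  rw [Mmap, dif_pos hk, Finset.mem_filter]; exact ⟨Finset.mem_univ _, by rw [Amap_E]; exact hx⟩

/-- The coded bit broadcast by helper `k` for message index `m`. -/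
noncomputable def helperBit (hN : Fintype.card (FI Q r H c1 c2) = N) {k : Fin (Q + H)}
    (hk : ¬ (k : ℕ) < Q)
    (lv : Fin Q → {n : Fin N // n ∈ Mmap hN k} → Fin T → Bool) :
    MI Q r T c1 c2 → Bool
  | (.inl (B, j), t) =>
      toB (∑ q ∈ B.1.attach, toZ (lv q.1 ⟨E hN (.inl (⟨B.1.erase q.1, by
          simp [Finset.card_erase_of_mem q.2, B.2]⟩,
          ⟨(k : ℕ) - Q, by have := k.isLt; omega⟩, j)),
          mem_Mmap_helper hN hk _ rfl⟩ t))
  | (.inr (B, j), t) =>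
      toB (∑ q ∈ B.1.attach, toZ (lv q.1 ⟨E hN (.inr (⟨B.1.erase q.1, by
          simp [Finset.card_erase_of_mem q.2, B.2]⟩,
          ⟨(k : ℕ) - Q, by have := k.isLt; omega⟩, j)),
          mem_Mmap_helper hN hk _ rfl⟩ t))

noncomputable def encmap (hN : Fintype.card (FI Q r H c1 c2) = N) (k : Fin (Q + H))
    (lv : Fin Q → {n : Fin N // n ∈ Mmap hN k} → Fin T → Bool) :
    Fin (lenmap Q H r T c1 c2 k) → Bool :=
  fun i =>
    if hk : (k : ℕ) < Q then false
    else if hi : (i : ℕ) < Fintype.card (MI Q r T c1 c2) then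
      helperBit hN hk lv ((eM Q r T c1 c2).symm ⟨(i : ℕ), hi⟩)
    else false

section
variable {Q r H c1 c2 N T : ℕ}

noncomputable def decmap (hN : Fintype.card (FI Q r H c1 c2) = N) (k : Fin (Q + H))
    (q : Fin Q)
    (msgs : (j : Fin (Q + H)) → Fin (lenmap Q H r T c1 c2 j) → Bool)
    (lv : Fin Q → {n : Fin N // n ∈ Mmap hN k} → Fin T → Bool) :
    Fin N → Fin T → Bool :=
  fun n t =>
  if hn : n ∈ Mmap hN k then lv q ⟨n, hn⟩ t
  else if hk : (k : ℕ) < Q then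
    if hq2 : q = ⟨(k : ℕ), hk⟩ then
      have hqA : q ∉ Amap hN n := by
        intro hmem
        apply hn
        simp only [Mmap, dif_pos hk, Finset.mem_filter, Finset.mem_univ, true_and]
        rwa [hq2] at hmem
      match hE : (E hN).symm n with
      | .inl (A, hh, j) =>
        have hA : Amap hN n = A.1 := by simp only [Amap, hE, prof]
        have hqA1 : q ∉ A.1 := fun h => hqA (hA ▸ h)
        have hB : (insert q A.1).card = r + 2 := by
          rw [Finset.card_insert_of_notMem hqA1, A.2]
        let jH : Fin (Q + H) := ⟨Q + (hh : ℕ), by have := hh.isLt; omega⟩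
        have hlen : ¬ ((jH : ℕ) < Q) := by simp [jH]
        toB (toZ (msgs jH ⟨((eM Q r T c1 c2) ((.inl (⟨insert q A.1, hB⟩, j)), t) : ℕ), by
            simp only [lenmap, if_neg hlen]
            exact ((eM Q r T c1 c2) ((.inl (⟨insert q A.1, hB⟩, j)), t)).isLt⟩) +
          ∑ u ∈ A.1.attach, toZ (lv u.1 ⟨E hN (.inl (⟨(insert q A.1).erase u.1, by
              rw [Finset.card_erase_of_mem (Finset.mem_insert_of_mem u.2), hB]; omega⟩, hh, j)), by
            apply mem_Mmap_solver hN hk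
            simp only [prof]
            rw [← hq2]
            exact Finset.mem_erase.mpr ⟨fun h => hqA1 (h ▸ u.2), Finset.mem_insert_self _ _⟩⟩ t))
      | .inr (A, hh, j) =>
        have hA : Amap hN n = A.1 := by simp only [Amap, hE, prof]
        have hqA1 : q ∉ A.1 := fun h => hqA (hA ▸ h)
        have hB : (insert q A.1).card = r + 1 := by
          rw [Finset.card_insert_of_notMem hqA1, A.2]
        let jH : Fin (Q + H) := ⟨Q + (hh : ℕ), by have := hh.isLt; omega⟩
        have hlen : ¬ ((jH : ℕ) < Q) := by simp [jH]
        toB (toZ (msgs jH ⟨((eM Q r T c1 c2) ((.inr (⟨insert q A.1, hB⟩, j)), t) : ℕ), by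
            simp only [lenmap, if_neg hlen]
            exact ((eM Q r T c1 c2) ((.inr (⟨insert q A.1, hB⟩, j)), t)).isLt⟩) +
          ∑ u ∈ A.1.attach, toZ (lv u.1 ⟨E hN (.inr (⟨(insert q A.1).erase u.1, by
              rw [Finset.card_erase_of_mem (Finset.mem_insert_of_mem u.2), hB]; omega⟩, hh, j)), by
            apply mem_Mmap_solver hN hk
            simp only [prof]
            rw [← hq2]
            exact Finset.mem_erase.mpr ⟨fun h => hqA1 (h ▸ u.2), Finset.mem_insert_self _ _⟩⟩ t))
    else false
  else false
section
open Finset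
variable {α M : Type*} [AddCommMonoid M] [DecidableEq α]

lemma sum_attach_insert {q : α} {A : Finset α} (hq : q ∉ A)
    (f : (x : α) → x ∈ insert q A → M) :
    ∑ x ∈ (insert q A).attach, f x.1 x.2 =
      f q (Finset.mem_insert_self q A) +
        ∑ x ∈ A.attach, f x.1 (Finset.mem_insert_of_mem x.2) := by
  rw [Finset.attach_insert, Finset.sum_insert, Finset.sum_image]
  · intro x _ y _ hxy
    have h2 := congrArg Subtype.val hxy
    simp only [] at h2
    exact Subtype.ext h2
  · simp only [Finset.mem_image, Finset.mem_attach, true_and, not_exists]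
    intro x hx
    have h2 := congrArg Subtype.val hx
    simp only [] at h2
    exact absurd (h2 ▸ x.2) hq
end

section
open Finset
variable {Q r H c1 c2 N T : ℕ}

lemma correct_decmap (hN : Fintype.card (FI Q r H c1 c2) = N)
    (v : Fin Q × Fin N → Fin T → Bool) (k : Fin (Q + H)) (q : Fin Q)
    (hq : q ∈ Wmap Q H k) :
    decmap (T := T) hN k q
      (fun j => encmap hN j (fun q' n' => v (q', n'.1)))
      (fun q' n' => v (q', n'.1)) = fun n => v (q, n) := by
  have hk : (k : ℕ) < Q := by
    by_contra hk
    simp [Wmap, dif_neg hk] at hq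
  have hq2 : q = ⟨(k : ℕ), hk⟩ := by
    simpa [Wmap, dif_pos hk] using hq
  funext n t
  by_cases hn : n ∈ Mmap hN k
  · simp only [decmap, dif_pos hn]
  · simp only [decmap, dif_neg hn, dif_pos hk, dif_pos hq2]
    split
    next A hh j hE =>
      have hjH : ¬ ((Q + (hh : ℕ)) < Q) := by omega
      simp only [encmap, hjH, dite_false, Fin.is_lt, dite_true, Fin.eta,
        Equiv.symm_apply_apply, helperBit, Nat.add_sub_cancel_left, toZ_toB]
      have hnE : CSE.E hN (Sum.inl (A, hh, j)) = n := by
        rw [← hE, Equiv.apply_symm_apply]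
      have hA : Amap hN n = (A : Finset (Fin Q)) := by
        rw [Amap, hE]; rfl
      have hqA1 : q ∉ (A : Finset (Fin Q)) := by
        intro hmem
        exact hn (by simp [Mmap, dif_pos hk, hA, ← hq2, hmem])
      rw [sum_attach_insert hqA1 (f := fun u hu => toZ (v (u, E hN (Sum.inl
        (⟨(insert q (A : Finset (Fin Q))).erase u, by
          simp [Finset.card_erase_of_mem hu, Finset.card_insert_of_notMem hqA1, A.2]⟩,
          hh, j))) t))]
      simp only [Finset.erase_insert hqA1, Subtype.coe_eta, hnE]
      rw [add_assoc, zmod2_add_self, add_zero, toB_toZ]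
    next A hh j hE =>
      have hjH : ¬ ((Q + (hh : ℕ)) < Q) := by omega
      simp only [encmap, hjH, dite_false, Fin.is_lt, dite_true, Fin.eta,
        Equiv.symm_apply_apply, helperBit, Nat.add_sub_cancel_left, toZ_toB]
      have hnE : CSE.E hN (Sum.inr (A, hh, j)) = n := by
        rw [← hE, Equiv.apply_symm_apply]
      have hA : Amap hN n = (A : Finset (Fin Q)) := by
        rw [Amap, hE]; rfl
      have hqA1 : q ∉ (A : Finset (Fin Q)) := by
        intro hmem
        exact hn (by simp [Mmap, dif_pos hk, hA, ← hq2, hmem])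
      rw [sum_attach_insert hqA1 (f := fun u hu => toZ (v (u, E hN (Sum.inr
        (⟨(insert q (A : Finset (Fin Q))).erase u, by
          simp [Finset.card_erase_of_mem hu, Finset.card_insert_of_notMem hqA1, A.2]⟩,
          hh, j))) t))]
      simp only [Finset.erase_insert hqA1, Subtype.coe_eta, hnE]
      rw [add_assoc, zmod2_add_self, add_zero, toB_toZ]
lemma card_FI_eq : Fintype.card (FI Q r H c1 c2) =
    Nat.choose Q (r + 1) * (H * c1) + Nat.choose Q r * (H * c2) := by
  simp [Fintype.card_finset_len, mul_assoc]

lemma card_MI_eq : Fintype.card (MI Q r T c1 c2) =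
    (Nat.choose Q (r + 2) * c1 + Nat.choose Q (r + 1) * c2) * T := by
  simp [Fintype.card_finset_len, add_mul]

lemma cover_Mmap (hN : Fintype.card (FI Q r H c1 c2) = N) (n : Fin N) :
    ∃ k : Fin (Q + H), n ∈ Mmap hN k := by
  refine ⟨⟨Q + (Hmap hN n : ℕ), by have := (Hmap hN n).isLt; omega⟩, ?_⟩
  have href : ¬ ((Q + (Hmap hN n : ℕ)) < Q) := by omega
  simp [Mmap, dif_neg href]

lemma sum_lenmap : ∑ k : Fin (Q + H), lenmap Q H r T c1 c2 k =
    H * Fintype.card (MI Q r T c1 c2) := by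
  rw [Fin.sum_univ_add (f := fun k : Fin (Q + H) => lenmap Q H r T c1 c2 k)]
  have h1 : ∀ i : Fin Q, lenmap Q H r T c1 c2 (Fin.castAdd H i) = 0 := by
    intro i; simp [lenmap, Fin.castAdd, i.isLt]
  have h2 : ∀ i : Fin H, lenmap Q H r T c1 c2 (Fin.natAdd Q i) =
      Fintype.card (MI Q r T c1 c2) := by
    intro i; simp [lenmap, Fin.natAdd]
  simp [h1, h2, Finset.sum_const, mul_comm]

end
open Finset
section
variable {Q r H c1 c2 N T : ℕ}

def prodSubtypeSnd {α β : Type*} {p : β → Prop} : {s : α × β // p s.2} ≃ α × {b // p b} :=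
  ⟨fun x => (x.1.1, ⟨x.1.2, x.2⟩), fun x => ⟨(x.1, x.2.1), x.2.2⟩,
   fun _ => rfl, fun _ => rfl⟩

lemma card_subsets_mem (a : Fin Q) (s : ℕ) :
    Fintype.card {A : Finset (Fin Q) // A.card = s + 1 ∧ a ∈ A} = (Q - 1).choose s := by
  rw [Fintype.card_subtype]
  rw [Finset.card_bij' (fun A _ => A.erase a) (fun B _ => insert a B) ?hi ?hj ?left ?right]
  · rw [Finset.card_powersetCard, Finset.card_erase_of_mem (Finset.mem_univ a),
      Finset.card_univ, Fintype.card_fin]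
  case hi =>
    intro A hA
    simp only [Finset.mem_filter, Finset.mem_univ, true_and] at hA
    rw [Finset.mem_powersetCard]
    exact ⟨Finset.erase_subset_erase a (Finset.subset_univ A),
      by simp [Finset.card_erase_of_mem hA.2, hA.1]⟩
  case hj =>
    intro B hB
    rw [Finset.mem_powersetCard] at hB
    have haB : a ∉ B := fun h => (Finset.mem_erase.mp (hB.1 h)).1 rfl
    simp only [Finset.mem_filter, Finset.mem_univ, true_and]
    exact ⟨by rw [Finset.card_insert_of_notMem haB, hB.2], Finset.mem_insert_self a B⟩
  case left =>
    intro A hA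
    simp only [Finset.mem_filter, Finset.mem_univ, true_and] at hA
    exact Finset.insert_erase hA.2
  case right =>
    intro B hB
    rw [Finset.mem_powersetCard] at hB
    exact Finset.erase_insert (fun h => (Finset.mem_erase.mp (hB.1 h)).1 rfl)

lemma card_subsets_mem_zero (a : Fin Q) :
    Fintype.card {A : Finset (Fin Q) // A.card = 0 ∧ a ∈ A} = 0 := by
  rw [Fintype.card_eq_zero_iff]
  constructor
  rintro ⟨A, h0, ha⟩
  rw [Finset.card_eq_zero] at h0
  subst h0
  simp at ha

lemma card_Mmap_solver (hN : Fintype.card (FI Q r H c1 c2) = N) (k : Fin (Q + H))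
    (hk : (k : ℕ) < Q) :
    (Mmap hN k).card =
      Fintype.card {A : Finset (Fin Q) // A.card = r + 1 ∧ (⟨(k : ℕ), hk⟩ : Fin Q) ∈ A}
          * (H * c1) +
        Fintype.card {A : Finset (Fin Q) // A.card = r ∧ (⟨(k : ℕ), hk⟩ : Fin Q) ∈ A}
          * (H * c2) := by
  set a : Fin Q := ⟨(k : ℕ), hk⟩
  rw [Mmap, dif_pos hk, ← Fintype.card_subtype]
  rw [Fintype.card_congr ((Equiv.subtypeEquiv (E hN).symm (p := fun n => (⟨(k : ℕ), hk⟩ : Fin Q) ∈ Amap hN n) (q := fun x : FI Q r H c1 c2 => (⟨(k : ℕ), hk⟩ : Fin Q) ∈ (prof x).1) (fun n => Iff.rfl)).trans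
    Equiv.subtypeSum)]
  rw [Fintype.card_sum]
  dsimp only [prof]
  erw [
    Fintype.card_congr (Equiv.prodSubtypeFstEquivSubtypeProd
      (p := fun A : {A : Finset (Fin Q) // A.card = r + 1} => a ∈ A.1)),
    Fintype.card_congr (Equiv.prodSubtypeFstEquivSubtypeProd
      (p := fun A : {A : Finset (Fin Q) // A.card = r} => a ∈ A.1))]
  simp only [Fintype.card_prod, Fintype.card_fin]
  rw [Fintype.card_congr (Equiv.subtypeSubtypeEquivSubtypeInter
      (fun A : Finset (Fin Q) => A.card = r + 1) (fun A => a ∈ A)),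
    Fintype.card_congr (Equiv.subtypeSubtypeEquivSubtypeInter
      (fun A : Finset (Fin Q) => A.card = r) (fun A => a ∈ A))]

lemma card_Mmap_helper (hN : Fintype.card (FI Q r H c1 c2) = N) (k : Fin (Q + H))
    (hk : ¬ (k : ℕ) < Q) :
    (Mmap hN k).card = Nat.choose Q (r + 1) * c1 + Nat.choose Q r * c2 := by
  have hkQ : (k : ℕ) - Q < H := by have := k.isLt; omega
  have h1 : Fintype.card {h : Fin H // (h : ℕ) = (k : ℕ) - Q} = 1 := by
    rw [Fintype.card_congr (Equiv.subtypeEquivRight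
      (fun h => (Fin.ext_iff (b := ⟨(k : ℕ) - Q, hkQ⟩)).symm)),
      Fintype.card_subtype_eq]
  rw [Mmap, dif_neg hk, ← Fintype.card_subtype]
  rw [Fintype.card_congr ((Equiv.subtypeEquiv (E hN).symm
    (p := fun n => ((Hmap hN n : ℕ) = (k : ℕ) - Q))
    (q := fun x : FI Q r H c1 c2 => (((prof x).2 : ℕ) = (k : ℕ) - Q))
    (fun n => Iff.rfl)).trans Equiv.subtypeSum)]
  rw [Fintype.card_sum]
  dsimp only [prof]
  erw [
    Fintype.card_congr (prodSubtypeSnd (p := fun y : Fin H × Fin c1 => ((y.1 : ℕ) = (k : ℕ) - Q))),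
    Fintype.card_congr (prodSubtypeSnd (p := fun y : Fin H × Fin c2 => ((y.1 : ℕ) = (k : ℕ) - Q)))]
  simp only [Fintype.card_prod]
  rw [Fintype.card_congr (Equiv.prodSubtypeFstEquivSubtypeProd
      (p := fun h : Fin H => (h : ℕ) = (k : ℕ) - Q) (β := Fin c1)),
    Fintype.card_congr (Equiv.prodSubtypeFstEquivSubtypeProd
      (p := fun h : Fin H => (h : ℕ) = (k : ℕ) - Q) (β := Fin c2))]
  simp [Fintype.card_prod, Fintype.card_fin, h1, Fintype.card_finset_len]

end
end
end CSE


/-- achievability by memory sharing between two integer points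
`r₋` and `r₊ = r₋ + 1` (used for the parallel implementation). -/
theorem coded_scheme_exists_mixed (Q rm rp H N N1 N2 : ℕ) (hQ : 2 ≤ Q)
    (hrm : rm ≤ Q - 2) (hrp : rp = rm + 1) (hH : 1 ≤ H)
    (hN : N = N1 + N2) (hNpos : 1 ≤ N)
    (hd1 : H * Nat.choose Q rp ∣ N1) (hd2 : H * Nat.choose Q rm ∣ N2) :
    ∀ T : ℕ, 1 ≤ T → ∃ S : Scheme (Q + H) N Q T,
      SingletonReduce S ∧
      (∀ (k : Fin (Q + H)) (h : (k : ℕ) < Q), S.W k = {⟨(k : ℕ), h⟩}) ∧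
      (∀ k : Fin (Q + H), Q ≤ (k : ℕ) → S.W k = ∅) ∧
      (∀ k : Fin (Q + H), (k : ℕ) < Q → (S.M k).card * Q = N1 * rp + N2 * rm) ∧
      (∀ k : Fin (Q + H), Q ≤ (k : ℕ) → (S.M k).card * H = N) ∧
      commLoad S = ((N1 : ℝ) * (((Q : ℝ) - rp) / ((Q : ℝ) * (rp + 1)))
        + (N2 : ℝ) * (((Q : ℝ) - rm) / ((Q : ℝ) * (rm + 1)))) / N := by
  subst hrp
  intro T hT
  obtain ⟨c1, hc1⟩ := hd1
  obtain ⟨c2, hc2⟩ := hd2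
  have hr2 : rm + 2 ≤ Q := by omega
  have hN' : Fintype.card (CSE.FI Q rm H c1 c2) = N := by
    rw [CSE.card_FI_eq, hN, hc1, hc2]; ring
  refine ⟨⟨CSE.Mmap hN', CSE.Wmap Q H, CSE.cover_Mmap hN', CSE.lenmap Q H rm T c1 c2,
    CSE.encmap hN', fun k q _ => CSE.decmap hN' k q,
    fun v k q hq => CSE.correct_decmap hN' v k q hq⟩, ?_, ?_, ?_, ?_, ?_, ?_⟩
  · refine ⟨?_, ?_, ?_⟩
    · intro j k hjk
      show Disjoint (CSE.Wmap Q H j) (CSE.Wmap Q H k)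
      unfold CSE.Wmap
      split_ifs with h1 h2 h2 <;> simp
      intro hval
      exact hjk (Fin.ext hval)
    · intro q
      refine ⟨⟨(q : ℕ), by omega⟩, ?_⟩
      simp [CSE.Wmap, Fin.ext_iff]
    · intro k
      show (CSE.Wmap Q H k).card ≤ 1
      unfold CSE.Wmap
      split_ifs <;> simp
  · intro k h
    simp [CSE.Wmap, dif_pos h]
  · intro k h
    simp [CSE.Wmap, dif_neg (Nat.not_lt.mpr h)]
  · intro k hk
    show (CSE.Mmap hN' k).card * Q = _
    rw [CSE.card_Mmap_solver hN' k hk]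
    have key1 : Nat.choose (Q - 1) rm * Q = Nat.choose Q (rm + 1) * (rm + 1) := by
      have hq1 : Q - 1 + 1 = Q := by omega
      have h := Nat.add_one_mul_choose_eq (Q - 1) rm
      simp only [Nat.succ_eq_add_one, hq1] at h
      linarith [h]
    have key2 : Fintype.card {A : Finset (Fin Q) // A.card = rm ∧ (⟨(k : ℕ), hk⟩ : Fin Q) ∈ A}
        * Q = Nat.choose Q rm * rm := by
      cases rm with
      | zero => rw [CSE.card_subsets_mem_zero]; simp
      | succ m =>
        rw [CSE.card_subsets_mem]
        have hq1 : Q - 1 + 1 = Q := by omega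
        have h := Nat.add_one_mul_choose_eq (Q - 1) m
        simp only [Nat.succ_eq_add_one, hq1] at h
        linarith [h]
    rw [CSE.card_subsets_mem]
    calc (Nat.choose (Q - 1) rm * (H * c1) +
          Fintype.card {A : Finset (Fin Q) // A.card = rm ∧ (⟨(k : ℕ), hk⟩ : Fin Q) ∈ A}
            * (H * c2)) * Q
        = (Nat.choose (Q - 1) rm * Q) * (H * c1) +
          (Fintype.card {A : Finset (Fin Q) // A.card = rm ∧ (⟨(k : ℕ), hk⟩ : Fin Q) ∈ A} * Q)
            * (H * c2) := by ring
      _ = N1 * (rm + 1) + N2 * rm := by rw [key1, key2, hc1, hc2]; ring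
  · intro k hk
    show (CSE.Mmap hN' k).card * H = _
    rw [CSE.card_Mmap_helper hN' k (Nat.not_lt.mpr hk), hN, hc1, hc2]
    ring
  · show (∑ k : Fin (Q + H), (CSE.lenmap Q H rm T c1 c2 k : ℝ)) / ((Q : ℝ) * N * T) = _
    rw [← Nat.cast_sum, CSE.sum_lenmap, CSE.card_MI_eq]
    have hA : (Nat.choose Q (rm + 2) : ℝ) * ((rm : ℝ) + 2) =
        (Nat.choose Q (rm + 1) : ℝ) * ((Q : ℝ) - ((rm : ℝ) + 1)) := by
      have h := Nat.choose_succ_right_eq Q (rm + 1)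
      have h2 : ((Nat.choose Q (rm + 2) * (rm + 2) : ℕ) : ℝ)
          = ((Nat.choose Q (rm + 1) * (Q - (rm + 1)) : ℕ) : ℝ) := congrArg (Nat.cast : ℕ → ℝ) h
      push_cast [Nat.cast_sub (by omega : rm + 1 ≤ Q)] at h2
      linarith [h2]
    have hB : (Nat.choose Q (rm + 1) : ℝ) * ((rm : ℝ) + 1) =
        (Nat.choose Q rm : ℝ) * ((Q : ℝ) - (rm : ℝ)) := by
      have h := Nat.choose_succ_right_eq Q rm
      have h2 : ((Nat.choose Q (rm + 1) * (rm + 1) : ℕ) : ℝ)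
          = ((Nat.choose Q rm * (Q - rm) : ℕ) : ℝ) := congrArg (Nat.cast : ℕ → ℝ) h
      push_cast [Nat.cast_sub (by omega : rm ≤ Q)] at h2
      linarith [h2]
    have e1 : (N1 : ℝ) = (H : ℝ) * (Nat.choose Q (rm + 1) : ℝ) * (c1 : ℝ) := by
      rw [hc1]; push_cast; ring
    have e2 : (N2 : ℝ) = (H : ℝ) * (Nat.choose Q rm : ℝ) * (c2 : ℝ) := by
      rw [hc2]; push_cast; ring
    have hQ0 : (Q : ℝ) ≠ 0 := by
      have : (0:ℝ) < Q := by exact_mod_cast (by omega : 0 < Q)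
      linarith
    have hN0 : (N : ℝ) ≠ 0 := by
      have : (0:ℝ) < N := by exact_mod_cast (by omega : 0 < N)
      linarith
    have hT0 : (T : ℝ) ≠ 0 := by
      have : (0:ℝ) < T := by exact_mod_cast (by omega : 0 < T)
      linarith
    have hr1 : ((rm : ℝ) + 1) ≠ 0 := by positivity
    have hr2' : ((rm : ℝ) + 2) ≠ 0 := by positivity
    rw [e1, e2]
    push_cast
    field_simp
    linear_combination ((c1 : ℝ) * ((rm : ℝ) + 1)) * hA +
      ((c2 : ℝ) * ((rm : ℝ) + 2)) * hB
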